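/- Global existence for the determining form: let X be a real Banach space, R > 0, a ∈ X with ‖a‖ ≤ R, set ρ = 4R, and let G : X → X be Lipschitz on the closed ball B̄(0, ρ). Define F(v) = −‖v − G(v)‖²·(v − a). Then for every v0 ∈ B̄(a, 3R) = {x ∈ X : ‖x − a‖ ≤ 3R} there exists a unique differentiable curve v : [0, ∞) → X with v(0) = v0, v'(s) = F(v(s)) for all s ≥ 0, and v(s) ∈ B̄(a, 3R) for all s ≥ 0. -/

import Mathlib

open Set Metric Real

lemma radial_invariance {X : Type*} [NormedAddCommGroup X] [NormedSpace ℝ X]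
    (a : X) (μ : X → ℝ) (hμc : Continuous μ) (hμ : ∀ x, μ x ≤ 0)
    (v : ℝ → X) (hv : ∀ s : ℝ, 0 ≤ s → HasDerivWithinAt v (μ (v s) • (v s - a)) (Set.Ici 0) s) :
    ∀ s : ℝ, 0 ≤ s → ‖v s - a‖ ≤ ‖v 0 - a‖ := by
  intro b hb
  have hvc : ContinuousOn v (Ici 0) := fun t ht => (hv t ht).continuousWithinAt
  set w : ℝ → X := fun t => v (max t 0) with hw
  have hmax : Continuous (fun t : ℝ => max t 0) := continuous_id.max continuous_const
  have hwc : Continuous w :=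
    hvc.comp_continuous hmax (fun x => mem_Ici.2 (le_max_right _ _))
  set f : ℝ → ℝ := fun t => -μ (w t) with hf
  have hfc : Continuous f := (hμc.comp hwc).neg
  have hf0 : ∀ t : ℝ, 0 ≤ t → f t = -μ (v t) := by
    intro t ht; simp [hf, hw, max_eq_left ht]
  set J : ℝ → ℝ := fun s => ∫ τ in (0:ℝ)..s, f τ with hJ
  have hJd : ∀ t : ℝ, HasDerivAt J (f t) t := by
    intro t
    exact intervalIntegral.integral_hasDerivAt_right (hfc.intervalIntegrable _ _)
      (hfc.stronglyMeasurableAtFilter _ _) hfc.continuousAt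
  set g : ℝ → X := fun s => Real.exp (J s) • (v s - a) with hg
  have hgd : ∀ t ∈ Icc 0 b, HasDerivWithinAt g 0 (Ici t) t := by
    intro t ht
    have h1 : HasDerivWithinAt (fun s => Real.exp (J s)) (Real.exp (J t) * f t) (Ici t) t :=
      ((hJd t).exp).hasDerivWithinAt
    have h2 : HasDerivWithinAt (fun s => v s - a) (μ (v t) • (v t - a)) (Ici t) t :=
      ((hv t ht.1).mono (Ici_subset_Ici.2 ht.1)).sub_const a
    have := h1.smul h2
    convert this using 1
    · rw [hg]; rfl
    rw [hf0 t ht.1]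
    module
  have hJc : Continuous J := continuous_iff_continuousAt.2 fun t => (hJd t).continuousAt
  have hgc : ContinuousOn g (Icc 0 b) :=
    (Real.continuous_exp.comp hJc).continuousOn.smul
      ((hvc.mono Icc_subset_Ici_self).sub continuousOn_const)
  have hconst := constant_of_has_deriv_right_zero hgc (fun t ht => hgd t (Ico_subset_Icc_self ht))
  have hb' : g b = g 0 := hconst b ⟨hb, le_refl b⟩
  have hJ0 : J 0 = 0 := by simp [hJ]
  have hJb : 0 ≤ J b := by
    apply intervalIntegral.integral_nonneg hb
    intro u hu
    simp only [hf, neg_nonneg]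
    exact hμ _
  have hnorm : Real.exp (J b) * ‖v b - a‖ = ‖v 0 - a‖ := by
    have := congrArg norm hb'
    simpa [hg, hJ0, norm_smul, abs_of_pos (Real.exp_pos _)] using this
  nlinarith [Real.one_le_exp hJb, norm_nonneg (v b - a), Real.exp_pos (J b)]

/-- Global existence and uniqueness for the determining form on the
forward-invariant ball `B̄(a, 3R)`, with `ρ = 4R`. -/
theorem detform_global_existence
    {X : Type*} [NormedAddCommGroup X] [NormedSpace ℝ X] [CompleteSpace X]
    (R : ℝ) (hR : 0 < R) (a : X) (ha : ‖a‖ ≤ R)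
    (G : X → X) (K : NNReal)
    (hG : LipschitzOnWith K G (Metric.closedBall 0 (4 * R))) :
    ∀ v0 ∈ Metric.closedBall a (3 * R),
      ∃ v : ℝ → X,
        (v 0 = v0
          ∧ (∀ s : ℝ, 0 ≤ s →
              HasDerivWithinAt v ((-(‖v s - G (v s)‖ ^ 2)) • (v s - a)) (Set.Ici 0) s
              ∧ v s ∈ Metric.closedBall a (3 * R)))
        ∧ ∀ u : ℝ → X,
            (u 0 = v0
              ∧ (∀ s : ℝ, 0 ≤ s →
                  HasDerivWithinAt u ((-(‖u s - G (u s)‖ ^ 2)) • (u s - a)) (Set.Ici 0) s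
                  ∧ u s ∈ Metric.closedBall a (3 * R))) →
            ∀ s : ℝ, 0 ≤ s → u s = v s := by
  intro v0 hv0mem
  have hRS : (0:ℝ) < 3*R := by linarith
  have hSsub : Metric.closedBall a (3*R) ⊆ Metric.closedBall (0:X) (4*R) := by
    intro x hx
    rw [Metric.mem_closedBall, dist_zero_right]
    have h1 : ‖x - a‖ ≤ 3*R := by
      rw [← dist_eq_norm]; exact Metric.mem_closedBall.1 (by simpa [mul_comm] using hx)
    calc ‖x‖ = ‖x - a + a‖ := by rw [sub_add_cancel]
      _ ≤ ‖x - a‖ + ‖a‖ := norm_add_le _ _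
      _ ≤ 4*R := by linarith
  -- bound for ‖x - G x‖ on the big ball
  set M : ℝ := 4*R + (‖G 0‖ + (K:ℝ)*(4*R)) with hM
  have hM0 : 0 ≤ M := by positivity
  have hMb : ∀ x ∈ Metric.closedBall (0:X) (4*R), ‖x - G x‖ ≤ M := by
    intro x hx
    have hx4 : ‖x‖ ≤ 4*R := by rw [← dist_zero_right]; exact Metric.mem_closedBall.1 hx
    have h0 : (0:X) ∈ Metric.closedBall (0:X) (4*R) := by
      exact Metric.mem_closedBall_self (by linarith : (0:ℝ) ≤ 4*R)
    have hGx : dist (G x) (G 0) ≤ (K:ℝ) * dist x 0 := hG.dist_le_mul x hx 0 h0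
    rw [dist_zero_right] at hGx
    have hGx' : ‖G x‖ ≤ ‖G 0‖ + (K:ℝ)*(4*R) := by
      calc ‖G x‖ ≤ ‖G x - G 0‖ + ‖G 0‖ := by
            calc ‖G x‖ = ‖G x - G 0 + G 0‖ := by rw [sub_add_cancel]
              _ ≤ _ := norm_add_le _ _
        _ ≤ (K:ℝ)*(4*R) + ‖G 0‖ := by
            rw [← dist_eq_norm]
            have : (K:ℝ) * ‖x‖ ≤ (K:ℝ)*(4*R) :=
              mul_le_mul_of_nonneg_left hx4 K.coe_nonneg
            linarith
        _ = _ := by ring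
    calc ‖x - G x‖ ≤ ‖x‖ + ‖G x‖ := norm_sub_le _ _
      _ ≤ M := by rw [hM]; linarith
  set φ : X → ℝ := fun x => -(‖x - G x‖^2) with hφ
  have hφb : ∀ x ∈ Metric.closedBall a (3*R), -(M^2) ≤ φ x ∧ φ x ≤ 0 := by
    intro x hx
    have h1 := hMb x (hSsub hx)
    constructor
    · simp only [hφ, neg_le_neg_iff]
      nlinarith [norm_nonneg (x - G x)]
    · simp only [hφ, neg_nonpos]
      positivity
  set Kφ : NNReal := (2*M*(1+(K:ℝ))).toNNReal with hKφ
  have hKφc : (Kφ : ℝ) = 2*M*(1+(K:ℝ)) := Real.coe_toNNReal _ (by positivity)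
  have hφlip : LipschitzOnWith Kφ φ (Metric.closedBall a (3*R)) := by
    rw [lipschitzOnWith_iff_dist_le_mul]
    intro x hx y hy
    have hxB := hSsub hx
    have hyB := hSsub hy
    have hA := hMb x hxB
    have hB := hMb y hyB
    have hGd : dist (G x) (G y) ≤ (K:ℝ) * dist x y := hG.dist_le_mul x hxB y hyB
    rw [dist_eq_norm, dist_eq_norm] at hGd
    have hdxy : dist x y = ‖x - y‖ := dist_eq_norm _ _
    have h2 : ‖(x - G x) - (y - G y)‖ ≤ (1+(K:ℝ)) * dist x y := by
      calc ‖(x - G x) - (y - G y)‖ = ‖(x - y) - (G x - G y)‖ := by congr 1; abel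
        _ ≤ ‖x - y‖ + ‖G x - G y‖ := norm_sub_le _ _
        _ ≤ (1+(K:ℝ)) * dist x y := by rw [hdxy]; nlinarith [K.coe_nonneg, norm_nonneg (x - y)]
    have h1 : |‖x - G x‖ - ‖y - G y‖| ≤ ‖(x - G x) - (y - G y)‖ := abs_norm_sub_norm_le _ _
    rw [Real.dist_eq, hKφc]
    have hd0 : (0:ℝ) ≤ dist x y := dist_nonneg
    have heq : φ x - φ y = -((‖x - G x‖ - ‖y - G y‖) * (‖x - G x‖ + ‖y - G y‖)) := by
      simp only [hφ]; ring
    rw [heq, abs_neg, abs_mul]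
    have hge : |‖x - G x‖ + ‖y - G y‖| ≤ 2*M := by
      rw [abs_of_nonneg (by positivity)]; linarith
    have := abs_nonneg (‖x - G x‖ - ‖y - G y‖)
    nlinarith
  obtain ⟨ψ, hψlip, hψeq⟩ := hφlip.extend_real
  set θ : X → ℝ := fun x => max (-(M^2)) (min (ψ x) 0) with hθ
  have hθlip : LipschitzWith Kφ θ := by
    rw [lipschitzWith_iff_dist_le_mul]
    intro x y
    have h1 : dist (θ x) (θ y) ≤ dist (ψ x) (ψ y) := by
      rw [Real.dist_eq, Real.dist_eq]
      calc |θ x - θ y| ≤ max |(-(M^2)) - (-(M^2))| |min (ψ x) 0 - min (ψ y) 0| :=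
            abs_max_sub_max_le_max _ _ _ _
        _ ≤ |ψ x - ψ y| := by
            apply max_le
            · simp [abs_nonneg]
            · calc |min (ψ x) 0 - min (ψ y) 0| ≤ max |ψ x - ψ y| |(0:ℝ) - 0| :=
                    abs_min_sub_min_le_max _ _ _ _
                _ ≤ |ψ x - ψ y| := by simp [abs_nonneg]
    exact h1.trans (hψlip.dist_le_mul x y)
  have hθS : ∀ x ∈ Metric.closedBall a (3*R), θ x = φ x := by
    intro x hx
    have he : φ x = ψ x := hψeq hx
    have hb := hφb x hx
    simp only [hθ, ← he]
    rw [min_eq_left hb.2, max_eq_right hb.1]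
  have hθle : ∀ x, θ x ≤ 0 := by
    intro x
    apply max_le (neg_nonpos.2 (by positivity)) (min_le_right _ _)
  have hθge : ∀ x, -(M^2) ≤ θ x := fun x => le_max_left _ _
  have hθabs : ∀ x, |θ x| ≤ M^2 := by
    intro x
    rw [abs_le]
    exact ⟨hθge x, (hθle x).trans (by positivity)⟩
  -- radial retraction
  set c : X → ℝ := fun x => 3*R / max (3*R) ‖x - a‖ with hc
  have hmpos : ∀ x : X, 0 < max (3*R) ‖x - a‖ := fun x => lt_of_lt_of_le hRS (le_max_left _ _)
  have hc1 : ∀ x, c x ≤ 1 := fun x => (div_le_one (hmpos x)).2 (le_max_left _ _)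
  have hc0 : ∀ x, 0 ≤ c x := fun x => div_nonneg hRS.le (hmpos x).le
  have hcS : ∀ x ∈ Metric.closedBall a (3*R), c x = 1 := by
    intro x hx
    have h1 : ‖x - a‖ ≤ 3*R := by
      rw [← dist_eq_norm]; exact Metric.mem_closedBall.1 hx
    simp only [hc, max_eq_left h1]
    exact div_self hRS.ne'
  have hcc : Continuous c :=
    continuous_const.div (continuous_const.max ((continuous_id.sub continuous_const).norm))
      (fun x => (hmpos x).ne')
  have hcN : ∀ x : X, c x * ‖x - a‖ ≤ 3*R := by
    intro x
    rw [hc]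
    rw [div_mul_eq_mul_div, div_le_iff₀ (hmpos x)]
    have := le_max_right (3*R) ‖x - a‖
    nlinarith [norm_nonneg (x - a)]
  set N : X → X := fun x => c x • (x - a) with hN
  have hNlip : ∀ x y, ‖N x - N y‖ ≤ 2 * ‖x - y‖ := by
    intro x y
    have key : N x - N y = c x • (x - y) + (c x - c y) • (y - a) := by
      simp only [hN]; module
    have hm : |max (3*R) ‖x - a‖ - max (3*R) ‖y - a‖| ≤ ‖x - y‖ := by
      calc |max (3*R) ‖x - a‖ - max (3*R) ‖y - a‖|
          ≤ max |3*R - 3*R| |‖x - a‖ - ‖y - a‖| := abs_max_sub_max_le_max _ _ _ _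
        _ ≤ ‖x - y‖ := by
            apply max_le
            · simp [norm_nonneg]
            · calc |‖x - a‖ - ‖y - a‖| ≤ ‖(x - a) - (y - a)‖ := abs_norm_sub_norm_le _ _
                _ = ‖x - y‖ := by congr 1; abel
    set mx := max (3*R) ‖x - a‖ with hmx
    set my := max (3*R) ‖y - a‖ with hmy
    have hmx0 : 0 < mx := hmpos x
    have hmy0 : 0 < my := hmpos y
    have hcd : |c x - c y| * ‖y - a‖ ≤ ‖x - y‖ := by
      have heq : c x - c y = 3*R*(my - mx)/(mx*my) := by
        simp only [hc, ← hmx, ← hmy]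
        field_simp
      rw [heq, abs_div, abs_mul, abs_of_pos (mul_pos hmx0 hmy0), abs_of_pos hRS]
      rw [div_mul_eq_mul_div, div_le_iff₀ (mul_pos hmx0 hmy0)]
      have h3 : |my - mx| ≤ ‖x - y‖ := by rw [abs_sub_comm]; exact hm
      have h4 : ‖y - a‖ ≤ my := le_max_right _ _
      have h5 : 3*R ≤ mx := le_max_left _ _
      have e1 : |my - mx| * ‖y - a‖ ≤ ‖x - y‖ * my :=
        mul_le_mul h3 h4 (norm_nonneg _) (norm_nonneg _)
      have e2 : 3*R*(|my - mx| * ‖y - a‖) ≤ mx*(‖x - y‖ * my) :=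
        mul_le_mul h5 e1 (by positivity) (by linarith)
      nlinarith [e2]
    calc ‖N x - N y‖ = ‖c x • (x - y) + (c x - c y) • (y - a)‖ := by rw [key]
      _ ≤ ‖c x • (x - y)‖ + ‖(c x - c y) • (y - a)‖ := norm_add_le _ _
      _ = c x * ‖x - y‖ + |c x - c y| * ‖y - a‖ := by
          rw [norm_smul, norm_smul, Real.norm_eq_abs, Real.norm_eq_abs, abs_of_nonneg (hc0 x)]
      _ ≤ 1 * ‖x - y‖ + ‖x - y‖ := by
          have := mul_le_mul_of_nonneg_right (hc1 x) (norm_nonneg (x - y))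
          linarith [hcd]
      _ = 2 * ‖x - y‖ := by ring
  have hNb : ∀ x, ‖N x‖ ≤ 3*R := by
    intro x
    rw [hN]
    simp only []
    rw [norm_smul, Real.norm_eq_abs, abs_of_nonneg (hc0 x)]
    exact hcN x
  -- the extended vector field
  set Fh : X → X := fun x => θ x • N x with hFh
  set C : ℝ := M^2*(3*R) with hC
  have hC0 : 0 ≤ C := by positivity
  have hFhb : ∀ x, ‖Fh x‖ ≤ C := by
    intro x
    rw [hFh]
    simp only []
    rw [norm_smul, Real.norm_eq_abs]
    calc |θ x| * ‖N x‖ ≤ M^2 * (3*R) :=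
      mul_le_mul (hθabs x) (hNb x) (norm_nonneg _) (by positivity)
      _ = C := hC.symm
  set K₀ : NNReal := (2*M^2 + (Kφ:ℝ)*(3*R)).toNNReal with hK₀
  have hK₀c : (K₀ : ℝ) = 2*M^2 + (Kφ:ℝ)*(3*R) := Real.coe_toNNReal _ (by positivity)
  have hFhlip : LipschitzWith K₀ Fh := by
    rw [lipschitzWith_iff_dist_le_mul]
    intro x y
    rw [dist_eq_norm, dist_eq_norm, hK₀c]
    have key : Fh x - Fh y = θ x • (N x - N y) + (θ x - θ y) • N y := by
      simp only [hFh]; module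
    have hθd : |θ x - θ y| ≤ (Kφ:ℝ) * ‖x - y‖ := by
      have := hθlip.dist_le_mul x y
      rwa [Real.dist_eq, dist_eq_norm] at this
    calc ‖Fh x - Fh y‖ = ‖θ x • (N x - N y) + (θ x - θ y) • N y‖ := by rw [key]
      _ ≤ ‖θ x • (N x - N y)‖ + ‖(θ x - θ y) • N y‖ := norm_add_le _ _
      _ = |θ x| * ‖N x - N y‖ + |θ x - θ y| * ‖N y‖ := by
          rw [norm_smul, norm_smul, Real.norm_eq_abs, Real.norm_eq_abs]
      _ ≤ M^2 * (2 * ‖x - y‖) + ((Kφ:ℝ) * ‖x - y‖) * (3*R) := by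
          have h1 := mul_le_mul (hθabs x) (hNlip x y) (norm_nonneg _) (by positivity)
          have h2 := mul_le_mul hθd (hNb y) (norm_nonneg _) (by positivity)
          linarith
      _ = (2*M^2 + (Kφ:ℝ)*(3*R)) * ‖x - y‖ := by ring
  -- Picard–Lindelöf on [0, n] for every n
  have hpl : ∀ n : ℕ, IsPicardLindelof (fun _ x => Fh x) (tmin := 0) (tmax := (n:ℝ))
      ⟨0, le_refl 0, Nat.cast_nonneg n⟩ v0 (C*n).toNNReal 0 C.toNNReal K₀ := by
    intro n
    refine IsPicardLindelof.of_time_independent (fun x hx => ?_) hFhlip.lipschitzOnWith ?_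
    · rw [Real.coe_toNNReal _ hC0]; exact hFhb x
    · rw [Real.coe_toNNReal _ hC0, Real.coe_toNNReal _ (mul_nonneg hC0 (Nat.cast_nonneg n))]
      simp [max_eq_left (Nat.cast_nonneg n)]
  choose w hw0 hwd using fun n : ℕ =>
    (hpl n).exists_eq_forall_mem_Icc_hasDerivWithinAt₀
  -- uniqueness for the extended field: solutions on [0,m] agree
  have huniq : ∀ m n : ℕ, m ≤ n → ∀ t ∈ Icc (0:ℝ) (m:ℝ), w m t = w n t := by
    intro m n hmn
    have hmn' : (m:ℝ) ≤ (n:ℝ) := Nat.cast_le.2 hmn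
    have hmem : ∀ t ∈ Ico (0:ℝ) (m:ℝ), Icc (0:ℝ) (m:ℝ) ∈ nhdsWithin t (Ici t) := by
      intro t ht
      exact mem_nhdsWithin.2 ⟨Iio (m:ℝ), isOpen_Iio, ht.2,
        fun σ hσ => ⟨ht.1.trans hσ.2, hσ.1.le⟩⟩
    have hmem' : ∀ t ∈ Ico (0:ℝ) (m:ℝ), Icc (0:ℝ) (n:ℝ) ∈ nhdsWithin t (Ici t) := by
      intro t ht
      exact mem_nhdsWithin.2 ⟨Iio (m:ℝ), isOpen_Iio, ht.2,
        fun σ hσ => ⟨ht.1.trans hσ.2, hσ.1.le.trans hmn'⟩⟩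
    have hcn : ContinuousOn (w n) (Icc 0 (n:ℝ)) := fun t ht => (hwd n t ht).continuousWithinAt
    apply ODE_solution_unique_of_mem_Icc_right
      (v := fun _ x => Fh x) (s := fun _ => (univ : Set X)) (K := K₀)
      (fun t _ => hFhlip.lipschitzOnWith)
      (fun t ht => (hwd m t ht).continuousWithinAt)
      (fun t ht => ((hwd m t (Ico_subset_Icc_self ht)).mono_of_mem_nhdsWithin (hmem t ht)))
      (fun t ht => mem_univ _)
      (hcn.mono (Icc_subset_Icc_right hmn'))
      (fun t ht => ((hwd n t ⟨ht.1, (Ico_subset_Icc_self ht).2.trans hmn'⟩).mono_of_mem_nhdsWithin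
        (hmem' t ht)))
      (fun t ht => mem_univ _)
      ((hw0 m).trans (hw0 n).symm)
  -- the glued global solution
  set v : ℝ → X := fun s => w (⌊s⌋₊ + 1) s with hvdef
  have hvw : ∀ (n : ℕ) (t : ℝ), t ∈ Icc (0:ℝ) (n:ℝ) → v t = w n t := by
    intro n t ht
    have htf : t < ((⌊t⌋₊ + 1 : ℕ) : ℝ) := by push_cast; exact Nat.lt_floor_add_one t
    rcases le_total (⌊t⌋₊ + 1 : ℕ) n with h | h
    · exact huniq _ n h t ⟨ht.1, htf.le⟩
    · exact (huniq n _ h t ht).symm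
  have hv0' : v 0 = v0 := hw0 _
  have hvderiv : ∀ s : ℝ, 0 ≤ s → HasDerivWithinAt v (Fh (v s)) (Ici 0) s := by
    intro s hs
    set n : ℕ := ⌊s⌋₊ + 1 with hn
    have hsn : s < (n:ℝ) := by rw [hn]; push_cast; exact Nat.lt_floor_add_one s
    have hs' : s ∈ Icc (0:ℝ) (n:ℝ) := ⟨hs, hsn.le⟩
    have h2 : HasDerivWithinAt v (Fh (w n s)) (Icc (0:ℝ) (n:ℝ)) s :=
      (hwd n s hs').congr (fun t ht => hvw n t ht) (hvw n s hs')
    rw [← hvw n s hs'] at h2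
    exact h2.mono_of_mem_nhdsWithin
      (mem_nhdsWithin.2 ⟨Iio (n:ℝ), isOpen_Iio, hsn, fun σ hσ => ⟨hσ.2, hσ.1.le⟩⟩)
  -- invariance of the ball
  have hrad : ∀ x, Fh x = (θ x * c x) • (x - a) := by
    intro x
    simp only [hFh, hN, smul_smul]
  have hμc : Continuous (fun x => θ x * c x) := hθlip.continuous.mul hcc
  have hμle : ∀ x, θ x * c x ≤ 0 :=
    fun x => mul_nonpos_iff.2 (Or.inr ⟨hθle x, hc0 x⟩)
  have hinv := radial_invariance a (fun x => θ x * c x) hμc hμle v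
    (fun s hs => by rw [← hrad]; exact hvderiv s hs)
  have hv03 : ‖v 0 - a‖ ≤ 3*R := by
    rw [hv0', ← dist_eq_norm]
    exact Metric.mem_closedBall.1 hv0mem
  have hvS : ∀ s : ℝ, 0 ≤ s → v s ∈ Metric.closedBall a (3*R) := by
    intro s hs
    rw [Metric.mem_closedBall, dist_eq_norm]
    exact (hinv s hs).trans hv03
  -- the extended field agrees with the original on the ball
  have hFS : ∀ x ∈ Metric.closedBall a (3*R), Fh x = (-(‖x - G x‖^2)) • (x - a) := by
    intro x hx
    simp only [hFh, hN, hcS x hx, one_smul]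
    rw [hθS x hx]
  have h3eq : Metric.closedBall a (3*R) = Metric.closedBall a (3 * R) := rfl
  refine ⟨v, ⟨hv0', fun s hs => ⟨?_, hvS s hs⟩⟩, ?_⟩
  · have := hvderiv s hs
    rwa [hFS (v s) (hvS s hs)] at this
  · -- uniqueness
    rintro u ⟨hu0, hu⟩ s hs
    have hFlipS : LipschitzOnWith K₀ (fun x : X => (-(‖x - G x‖^2)) • (x - a))
        (Metric.closedBall a (3*R)) := by
      rw [lipschitzOnWith_iff_dist_le_mul]
      intro x hx y hy
      rw [← hFS x hx, ← hFS y hy]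
      exact hFhlip.dist_le_mul x y
    have key := ODE_solution_unique_of_mem_Icc_right
      (v := fun _ x => (-(‖x - G x‖^2)) • (x - a))
      (s := fun _ => Metric.closedBall a (3*R)) (K := K₀) (a := 0) (b := s)
      (fun t _ => hFlipS)
      (fun t ht => ((hu t ht.1).1.continuousWithinAt).mono
        (fun σ hσ => hσ.1 : Icc (0:ℝ) s ⊆ Ici 0))
      (fun t ht => (hu t ht.1).1.mono (Ici_subset_Ici.2 ht.1))
      (fun t ht => (hu t ht.1).2)
      (fun t ht => by
        have := hvderiv t ht.1
        rw [hFS (v t) (hvS t ht.1)] at this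
        exact this.continuousWithinAt.mono (fun σ hσ => hσ.1 : Icc (0:ℝ) s ⊆ Ici 0))
      (fun t ht => by
        have := hvderiv t ht.1
        rw [hFS (v t) (hvS t ht.1)] at this
        exact this.mono (Ici_subset_Ici.2 ht.1))
      (fun t ht => hvS t ht.1)
      (hu0.trans hv0'.symm)
    exact key ⟨hs, le_refl s⟩
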